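/- Assume additionally r ≤ s. Then for all integers i,j: k(i−1,j) − k(i+1,j) ∈ {0,2}, k(i,j−1) − k(i,j+1) ∈ {0,2}, and k(i+1,j) − k(i,j+1) ∈ {0,2}. -/
import Mathlib

lemma floor_intCast_div_intCast (a b : ℤ) (hb : 0 < b) :
    ⌊((a : ℚ) / (b : ℚ))⌋ = a / b := by
  have h : b = ((b.toNat : ℕ) : ℤ) := by omega
  rw [h]
  push_cast
  exact Rat.floor_intCast_div_natCast a b.toNat

/-- Lemma 2.3: restrictions for (r,s,t)-slanted stepped surfaces, `r ≤ s`: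
`k(i−1,j) − k(i+1,j) ∈ {0,2}`, `k(i,j−1) − k(i,j+1) ∈ {0,2}`,
`k(i+1,j) − k(i,j+1) ∈ {0,2}`. -/
theorem slanted_height_restrictions
    (r s t : ℤ) (hr0 : 0 ≤ r) (hrt : r < t) (hs0 : 0 ≤ s) (hst : s < t) (hrs : r ≤ s)
    (k : ℤ → ℤ → ℤ)
    (hk : ∀ i j : ℤ,
      k i j = i + j - 2 * ⌊((r * i + s * j + t * (i + j) : ℤ) : ℚ) / ((2 * t : ℤ) : ℚ)⌋) :
    ∀ i j : ℤ,
      k (i - 1) j - k (i + 1) j ∈ ({0, 2} : Set ℤ) ∧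
      k i (j - 1) - k i (j + 1) ∈ ({0, 2} : Set ℤ) ∧
      k (i + 1) j - k i (j + 1) ∈ ({0, 2} : Set ℤ) := by
  intro i j
  have ht : (0:ℤ) < 2 * t := by omega
  have hfl : ∀ a : ℤ, ⌊((a : ℤ) : ℚ) / ((2 * t : ℤ) : ℚ)⌋ = a / (2 * t) := fun a =>
    floor_intCast_div_intCast a (2 * t) ht
  have key : ∀ a b : ℤ, a - b = r - s ∨ a - b = 2 * (r + t) ∨ a - b = 2 * (s + t) →
      a - 2 * t * (a / (2*t)) = a % (2*t) ∧ b - 2 * t * (b / (2*t)) = b % (2*t) ∧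
      0 ≤ a % (2*t) ∧ a % (2*t) < 2*t ∧ 0 ≤ b % (2*t) ∧ b % (2*t) < 2*t := by
    intro a b _
    refine ⟨?_, ?_, Int.emod_nonneg a (by omega), Int.emod_lt_of_pos a ht,
      Int.emod_nonneg b (by omega), Int.emod_lt_of_pos b ht⟩
    · have := Int.mul_ediv_add_emod a (2*t); omega
    · have := Int.mul_ediv_add_emod b (2*t); omega
  simp only [hk, hfl, Set.mem_insert_iff, Set.mem_singleton_iff]
  refine ⟨?_, ?_, ?_⟩
  · have h := key (r * (i+1) + s * j + t * ((i+1) + j)) (r * (i-1) + s * j + t * ((i-1) + j))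
      (by right; left; ring)
    have h1 : (r * (i+1) + s * j + t * ((i+1) + j)) - (r * (i-1) + s * j + t * ((i-1) + j))
        = 2 * (r + t) := by ring
    -- nonlinear: multiples of 2t differ; bound quotient diff
    set a := r * (i+1) + s * j + t * ((i+1) + j)
    set b := r * (i-1) + s * j + t * ((i-1) + j)
    have hd : a / (2*t) - b / (2*t) = 1 ∨ a / (2*t) - b / (2*t) = 2 := by
      obtain ⟨ha, hb, _, _, _, _⟩ := h
      have : 2 * t * (a/(2*t) - b/(2*t)) = (a - b) - (a % (2*t) - b % (2*t)) := by
        rw [mul_sub]; omega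
      rw [h1] at this
      have hlo : 0 < a/(2*t) - b/(2*t) := by nlinarith
      have hhi : a/(2*t) - b/(2*t) < 3 := by nlinarith
      omega
    omega
  · have h1 : (r * i + s * (j+1) + t * (i + (j+1))) - (r * i + s * (j-1) + t * (i + (j-1)))
        = 2 * (s + t) := by ring
    set a := r * i + s * (j+1) + t * (i + (j+1))
    set b := r * i + s * (j-1) + t * (i + (j-1))
    have h := key a b (by right; right; exact h1)
    have hd : a / (2*t) - b / (2*t) = 1 ∨ a / (2*t) - b / (2*t) = 2 := by
      obtain ⟨ha, hb, _, _, _, _⟩ := h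
      have : 2 * t * (a/(2*t) - b/(2*t)) = (a - b) - (a % (2*t) - b % (2*t)) := by
        rw [mul_sub]; omega
      rw [h1] at this
      have hlo : 0 < a/(2*t) - b/(2*t) := by nlinarith
      have hhi : a/(2*t) - b/(2*t) < 3 := by nlinarith
      omega
    omega
  · have h1 : (r * (i+1) + s * j + t * ((i+1) + j)) - (r * i + s * (j+1) + t * (i + (j+1)))
        = r - s := by ring
    set a := r * (i+1) + s * j + t * ((i+1) + j)
    set b := r * i + s * (j+1) + t * (i + (j+1))
    have h := key a b (by left; exact h1)
    have hd : a / (2*t) - b / (2*t) = -1 ∨ a / (2*t) - b / (2*t) = 0 := by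
      obtain ⟨ha, hb, _, _, _, _⟩ := h
      have : 2 * t * (a/(2*t) - b/(2*t)) = (a - b) - (a % (2*t) - b % (2*t)) := by
        rw [mul_sub]; omega
      rw [h1] at this
      have hlo : -2 < a/(2*t) - b/(2*t) := by nlinarith
      have hhi : a/(2*t) - b/(2*t) < 1 := by nlinarith
      omega
    omega
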